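/- Let K = conv{(−1,−2),(−1,−1),(1,1),(1,2)} ⊂ ℝ² and K_t = diag(1,e^t)K. As t → −∞, K_t ∩ K converges (in Hausdorff distance) to the segment [−1/3, 1/3] × {0}; in particular |K_t ∩ K| → 0. -/

import Mathlib

open MeasureTheory Filter

noncomputable def e2 : (Fin 2 → ℝ) → EuclideanSpace ℝ (Fin 2) :=
  (EuclideanSpace.equiv (Fin 2) ℝ).symm

lemma e2_app (v : Fin 2 → ℝ) (i : Fin 2) : e2 v i = v i := rfl

lemma e2_eta (x : EuclideanSpace ℝ (Fin 2)) : e2 ![x 0, x 1] = x := by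
  ext i; fin_cases i <;> rfl

lemma K_bound (p : EuclideanSpace ℝ (Fin 2))
    (hp : p ∈ convexHull ℝ
      ({e2 ![-1, -2], e2 ![-1, -1], e2 ![1, 1], e2 ![1, 2]} : Set (EuclideanSpace ℝ (Fin 2)))) :
    |p 0| ≤ 1 ∧ |p 1 - 3/2 * p 0| ≤ 1/2 := by
  have hconv : Convex ℝ {q : EuclideanSpace ℝ (Fin 2) | |q 0| ≤ 1 ∧ |q 1 - 3/2 * q 0| ≤ 1/2} := by
    intro x hx y hy a b ha hb hab
    obtain ⟨hx1, hx2⟩ := hx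
    obtain ⟨hy1, hy2⟩ := hy
    rw [abs_le] at hx1 hx2 hy1 hy2
    have h0 : (a • x + b • y) 0 = a * x 0 + b * y 0 := rfl
    have h1 : (a • x + b • y) 1 = a * x 1 + b * y 1 := rfl
    refine ⟨abs_le.mpr ?_, abs_le.mpr ?_⟩
    · rw [h0]; constructor <;> nlinarith
    · rw [h0, h1]; constructor <;> nlinarith
  refine convexHull_min ?_ hconv hp
  rintro q hq
  simp only [Set.mem_insert_iff, Set.mem_singleton_iff] at hq
  rcases hq with rfl | rfl | rfl | rfl <;>
    refine ⟨?_, ?_⟩ <;> simp [e2_app] <;> norm_num [abs_le]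

lemma endpoints_mem :
    e2 ![-1/3, 0] ∈ convexHull ℝ
      ({e2 ![-1, -2], e2 ![-1, -1], e2 ![1, 1], e2 ![1, 2]} : Set (EuclideanSpace ℝ (Fin 2))) ∧
    e2 ![1/3, 0] ∈ convexHull ℝ
      ({e2 ![-1, -2], e2 ![-1, -1], e2 ![1, 1], e2 ![1, 2]} : Set (EuclideanSpace ℝ (Fin 2))) := by
  have hA : e2 ![(-1:ℝ), -2] ∈ convexHull ℝ
      ({e2 ![-1, -2], e2 ![-1, -1], e2 ![1, 1], e2 ![1, 2]} : Set (EuclideanSpace ℝ (Fin 2))) :=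
    subset_convexHull ℝ _ (by simp)
  have hB : e2 ![(-1:ℝ), -1] ∈ convexHull ℝ
      ({e2 ![-1, -2], e2 ![-1, -1], e2 ![1, 1], e2 ![1, 2]} : Set (EuclideanSpace ℝ (Fin 2))) :=
    subset_convexHull ℝ _ (by simp)
  have hC : e2 ![(1:ℝ), 1] ∈ convexHull ℝ
      ({e2 ![-1, -2], e2 ![-1, -1], e2 ![1, 1], e2 ![1, 2]} : Set (EuclideanSpace ℝ (Fin 2))) :=
    subset_convexHull ℝ _ (by simp)
  have hD : e2 ![(1:ℝ), 2] ∈ convexHull ℝ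
      ({e2 ![-1, -2], e2 ![-1, -1], e2 ![1, 1], e2 ![1, 2]} : Set (EuclideanSpace ℝ (Fin 2))) :=
    subset_convexHull ℝ _ (by simp)
  constructor
  · have h := (convex_convexHull ℝ _) hB hD (by norm_num : (0:ℝ) ≤ 2/3)
      (by norm_num : (0:ℝ) ≤ 1/3) (by norm_num)
    convert h using 1
    ext i
    fin_cases i <;>
      · show _ = (2/3 : ℝ) * _ + (1/3 : ℝ) * _
        norm_num [e2_app]
  · have h := (convex_convexHull ℝ _) hA hC (by norm_num : (0:ℝ) ≤ 1/3)
      (by norm_num : (0:ℝ) ≤ 2/3) (by norm_num)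
    convert h using 1
    ext i
    fin_cases i <;>
      · show _ = (1/3 : ℝ) * _ + (2/3 : ℝ) * _
        norm_num [e2_app]

lemma clamp_mem_seg (c : ℝ) (h1 : -1/3 ≤ c) (h2 : c ≤ 1/3) :
    e2 ![c, 0] ∈ segment ℝ (e2 ![-1/3, 0]) (e2 ![1/3, 0]) := by
  refine ⟨(1 - 3*c)/2, (1 + 3*c)/2, by linarith, by linarith, by ring, ?_⟩
  ext i
  fin_cases i <;>
    · show (1 - 3*c)/2 * _ + (1 + 3*c)/2 * _ = _
      norm_num [e2_app]; try ring

lemma box_volume (a : ℝ) :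
    volume {x : EuclideanSpace ℝ (Fin 2) | |x 0| ≤ 1 ∧ |x 1| ≤ a} ≤ ENNReal.ofReal (4*a) := by
  have hpre : {x : EuclideanSpace ℝ (Fin 2) | |x 0| ≤ 1 ∧ |x 1| ≤ a}
      = (MeasurableEquiv.toLp 2 (Fin 2 → ℝ)).symm ⁻¹'
        (Set.univ.pi fun i => Set.Icc (![(-1:ℝ), -a] i) (![(1:ℝ), a] i)) := by
    ext x
    simp only [Set.mem_setOf_eq, Set.mem_preimage, Set.mem_pi, Set.mem_univ, true_implies,
      Fin.forall_fin_two, Set.mem_Icc, abs_le]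
    rfl
  rw [hpre, (EuclideanSpace.volume_preserving_symm_measurableEquiv_toLp (Fin 2)).measure_preimage
    (MeasurableSet.univ_pi fun i => measurableSet_Icc).nullMeasurableSet]
  rw [volume_pi_pi]
  simp only [Fin.prod_univ_two, Real.volume_Icc]
  rw [← ENNReal.ofReal_mul (by norm_num)]
  apply ENNReal.ofReal_le_ofReal
  norm_num
  linarith

theorem stmt16 (K : Set (EuclideanSpace ℝ (Fin 2)))
    (hK : K = convexHull ℝ
      {e2 ![-1, -2], e2 ![-1, -1], e2 ![1, 1], e2 ![1, 2]})
    (Kt : ℝ → Set (EuclideanSpace ℝ (Fin 2)))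
    (hKt : ∀ t, Kt t = (fun x : EuclideanSpace ℝ (Fin 2) =>
      e2 ![x 0, Real.exp t * x 1]) '' K)
    (S : Set (EuclideanSpace ℝ (Fin 2)))
    (hS : S = segment ℝ (e2 ![-1/3, 0]) (e2 ![1/3, 0])) :
    Tendsto (fun t => Metric.hausdorffDist (Kt t ∩ K) S) atBot (nhds 0) ∧
      Tendsto (fun t => volume (Kt t ∩ K)) atBot (nhds 0) := by
  have hKb : ∀ p ∈ K, |p 0| ≤ 1 ∧ |p 1 - 3/2 * p 0| ≤ 1/2 := by
    intro p hp; exact K_bound p (hK ▸ hp)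
  -- S ⊆ K
  have hSK : S ⊆ K := by
    rw [hS, hK]
    exact (convex_convexHull ℝ _).segment_subset endpoints_mem.1 endpoints_mem.2
  -- points of S have second coordinate 0
  have hS1 : ∀ p ∈ S, p 1 = 0 := by
    intro p hp
    rw [hS] at hp
    obtain ⟨u, v, hu, hv, huv, rfl⟩ := hp
    show u * (0:ℝ) + v * 0 = 0
    ring
  -- S ⊆ Kt t
  have hSKt : ∀ t, S ⊆ Kt t := by
    intro t p hp
    rw [hKt t]
    refine ⟨p, hSK hp, ?_⟩
    show e2 ![p 0, Real.exp t * p 1] = p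
    rw [hS1 p hp, mul_zero, ← hS1 p hp, e2_eta]
  -- per-point bounds on the intersection
  have hpt : ∀ t, ∀ p ∈ Kt t ∩ K,
      |p 1| ≤ 2 * Real.exp t ∧ |p 0| ≤ 1/3 + 4/3 * Real.exp t ∧ |p 0| ≤ 1 := by
    intro t p ⟨hpt', hpK⟩
    rw [hKt t] at hpt'
    obtain ⟨q, hqK, hq⟩ := hpt'
    have hp1 : p 1 = Real.exp t * q 1 := by rw [← hq]; rfl
    obtain ⟨hq0, hq1⟩ := hKb q hqK
    obtain ⟨hp0, hp01⟩ := hKb p hpK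
    rw [abs_le] at hq0 hq1 hp0 hp01
    have hε : (0:ℝ) < Real.exp t := Real.exp_pos t
    have hq1' : |q 1| ≤ 2 := by rw [abs_le]; constructor <;> linarith [hq1.1, hq1.2, hq0.1, hq0.2]
    have h1 : |p 1| ≤ 2 * Real.exp t := by
      rw [hp1, abs_mul, abs_of_pos hε]
      calc Real.exp t * |q 1| ≤ Real.exp t * 2 := by
            exact mul_le_mul_of_nonneg_left hq1' hε.le
        _ = 2 * Real.exp t := by ring
    refine ⟨h1, ?_, abs_le.mpr hp0⟩
    rw [abs_le] at h1 ⊢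
    constructor <;> linarith [hp01.1, hp01.2, h1.1, h1.2]
  -- Hausdorff distance bound
  have hHD : ∀ t, Metric.hausdorffDist (Kt t ∩ K) S ≤ 4 * Real.exp t := by
    intro t
    have hε : (0:ℝ) < Real.exp t := Real.exp_pos t
    apply Metric.hausdorffDist_le_of_mem_dist (by positivity)
    · intro p hp
      obtain ⟨h1, h0, _⟩ := hpt t p hp
      set c : ℝ := max (-1/3) (min (1/3) (p 0)) with hc
      have hc1 : -1/3 ≤ c := le_max_left _ _
      have hc2 : c ≤ 1/3 := max_le (by norm_num) (min_le_left _ _)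
      have hdiff : |p 0 - c| ≤ 4/3 * Real.exp t := by
        rw [abs_le] at h0 ⊢
        rcases le_total (p 0) (-1/3) with h | h
        · have : min (1/3) (p 0) = p 0 := min_eq_right (by linarith)
          rw [hc, this]
          have : max (-1/3 : ℝ) (p 0) = -1/3 := max_eq_left h
          rw [this]
          constructor <;> linarith [h0.1]
        · rcases le_total (p 0) (1/3) with h' | h'
          · have h1' : min (1/3) (p 0) = p 0 := min_eq_right h'
            rw [hc, h1']
            have : max (-1/3 : ℝ) (p 0) = p 0 := max_eq_right h
            rw [this]
            constructor <;> linarith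
          · have h1' : min (1/3 : ℝ) (p 0) = 1/3 := min_eq_left h'
            rw [hc, h1']
            have : max (-1/3 : ℝ) (1/3 : ℝ) = 1/3 := by norm_num
            rw [this]
            constructor <;> linarith [h0.2]
      refine ⟨e2 ![c, 0], hS ▸ clamp_mem_seg c hc1 hc2, ?_⟩
      have hdeq : dist p (e2 ![c, 0]) = Real.sqrt ((p 0 - c)^2 + (p 1 - 0)^2) := by
        rw [EuclideanSpace.dist_eq, Fin.sum_univ_two]
        simp [Real.dist_eq, sq_abs, e2_app]
      rw [hdeq]
      rw [show (4 * Real.exp t) = Real.sqrt ((4 * Real.exp t)^2) from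
        (Real.sqrt_sq (by positivity)).symm]
      apply Real.sqrt_le_sqrt
      rw [abs_le] at hdiff h1
      nlinarith [hdiff.1, hdiff.2, h1.1, h1.2, hε.le]
    · intro x hx
      exact ⟨x, ⟨hSKt t hx, hSK hx⟩, by simp [dist_self]; positivity⟩
  -- volume bound
  have hVol : ∀ t, volume (Kt t ∩ K) ≤ ENNReal.ofReal (8 * Real.exp t) := by
    intro t
    have hsub : Kt t ∩ K ⊆ {x : EuclideanSpace ℝ (Fin 2) | |x 0| ≤ 1 ∧ |x 1| ≤ 2 * Real.exp t} := by
      intro p hp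
      obtain ⟨h1, _, h0⟩ := hpt t p hp
      exact ⟨h0, h1⟩
    calc volume (Kt t ∩ K) ≤ _ := measure_mono hsub
      _ ≤ ENNReal.ofReal (4 * (2 * Real.exp t)) := box_volume _
      _ = ENNReal.ofReal (8 * Real.exp t) := by ring_nf
  constructor
  · refine squeeze_zero (fun t => Metric.hausdorffDist_nonneg) hHD ?_
    have := Real.tendsto_exp_atBot.const_mul (4:ℝ)
    simpa using this
  · refine tendsto_of_tendsto_of_tendsto_of_le_of_le tendsto_const_nhds ?_
      (fun t => zero_le) hVol
    have h8 : Tendsto (fun t => 8 * Real.exp t) atBot (nhds 0) := by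
      have := Real.tendsto_exp_atBot.const_mul (8:ℝ)
      simpa using this
    have := ENNReal.tendsto_ofReal h8
    simpa using this
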